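/- Let X be a PSCA(v, t, λ) with v ≥ t ≥ 2 and λ ≥ 1. Then for every symbol w ∈ [v] and every integer s with 1 ≤ s < t, (1/(t!·λ)) · Σ_{j=0}^{v−1} j^s · d_w(j) = (1/v) · Σ_{i=0}^{v−1} i^s. In particular, the power sums Σ_j j^s d_w(j) for 1 ≤ s < t are independent of the symbol w. -/

import Mathlib

open scoped Classical

/-- A permutation `π` of `[v]` covers a sequence `s` of `t` distinct symbols if the
symbols appear in `π` in the given order, i.e. `π⁻¹(s 0) < ⋯ < π⁻¹(s (t-1))`. -/
def Covers {v t : ℕ} (π : Equiv.Perm (Fin v)) (s : Fin t → Fin v) : Prop :=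
  StrictMono fun i => π.symm (s i)

/-- `X` is a perfect sequence covering array PSCA(v, t, λ): every sequence of `t`
distinct symbols of `[v]` is covered by exactly `λ` permutations of `X` (with multiplicity). -/
def IsPSCA (v t l : ℕ) (X : Multiset (Equiv.Perm (Fin v))) : Prop :=
  ∀ s : Fin t → Fin v, Function.Injective s → X.countP (fun π => Covers π s) = l

/-- `dcount v X w j` is the number of permutations `π` in `X` (with multiplicity)
such that `π(j) = w`. -/
noncomputable def dcount (v : ℕ) (X : Multiset (Equiv.Perm (Fin v))) (w : Fin v) (j : ℕ) : ℕ :=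
  X.countP fun π => ∃ p : Fin v, (p : ℕ) = j ∧ π p = w

open Finset Function

namespace PSCAaux

variable {n k : ℕ}

/-- Two strict monotone maps from `Fin k` with the same image are equal. -/
lemma sm_eq_of_image_eq {α : Type*} [LinearOrder α] {f g : Fin k → α}
    (hf : StrictMono f) (hg : StrictMono g)
    (h : Finset.image f Finset.univ = Finset.image g Finset.univ) : f = g := by
  have hcard : (Finset.image f Finset.univ).card = k := by
    rw [Finset.card_image_of_injective _ hf.injective, Finset.card_univ, Fintype.card_fin]
  have h1 := Finset.orderEmbOfFin_unique hcard
    (fun x => Finset.mem_image_of_mem f (Finset.mem_univ x)) hf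
  have h2 := Finset.orderEmbOfFin_unique hcard
    (fun x => h ▸ Finset.mem_image_of_mem g (Finset.mem_univ x)) hg
  exact h1.trans h2.symm

lemma image_insertNth {α : Type*} [DecidableEq α] (i : Fin (k + 1)) (b : α) (a : Fin k → α) :
    Finset.image (Fin.insertNth i b a) Finset.univ = insert b (Finset.image a Finset.univ) := by
  ext y
  simp only [Finset.mem_image, Finset.mem_univ, true_and, Finset.mem_insert]
  constructor
  · rintro ⟨m, rfl⟩
    rcases eq_or_ne m i with rfl | hm
    · left; simp
    · obtain ⟨j, rfl⟩ := Fin.exists_succAbove_eq hm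
      right; exact ⟨j, by simp⟩
  · rintro (rfl | ⟨j, rfl⟩)
    · exact ⟨i, by simp⟩
    · exact ⟨i.succAbove j, by simp⟩

lemma strictMono_of_insertNth {α : Type*} [Preorder α] {i : Fin (k + 1)} {b : α}
    {a : Fin k → α} (h : StrictMono (Fin.insertNth i b a)) : StrictMono a := by
  have := h.comp (Fin.strictMono_succAbove i)
  simpa only [Function.comp_def, Fin.insertNth_apply_succAbove] using this

lemma comp_insertNth {α β : Sort*} (f : α → β) (i : Fin (k + 1)) (b : α) (a : Fin k → α) :
    f ∘ Fin.insertNth i b a = Fin.insertNth i (f b) (f ∘ a) := by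
  funext m
  rcases eq_or_ne m i with rfl | hm
  · simp [Fin.insertNth_apply_same]
  · obtain ⟨j, rfl⟩ := Fin.exists_succAbove_eq hm
    simp [Fin.insertNth_apply_succAbove]

lemma insertNth_injective {α : Type*} {i : Fin (k + 1)} {b : α} {a : Fin k → α}
    (ha : Function.Injective a) (hb : ∀ j, b ≠ a j) :
    Function.Injective (Fin.insertNth i b a) := by
  intro m₁ m₂ hm
  by_cases h1 : m₁ = i <;> by_cases h2 : m₂ = i
  · rw [h1, h2]
  · subst h1
    obtain ⟨j, rfl⟩ := Fin.exists_succAbove_eq h2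
    simp only [Fin.insertNth_apply_same, Fin.insertNth_apply_succAbove] at hm
    exact absurd hm (hb j)
  · subst h2
    obtain ⟨j, rfl⟩ := Fin.exists_succAbove_eq h1
    simp only [Fin.insertNth_apply_same, Fin.insertNth_apply_succAbove] at hm
    exact absurd hm.symm (hb j)
  · obtain ⟨j₁, rfl⟩ := Fin.exists_succAbove_eq h1
    obtain ⟨j₂, rfl⟩ := Fin.exists_succAbove_eq h2
    simp only [Fin.insertNth_apply_succAbove] at hm
    rw [ha hm]

lemma existsUnique_insertNth_strictMono {α : Type*} [LinearOrder α]
    {a : Fin k → α} (ha : StrictMono a) {b : α} (hb : ∀ j, b ≠ a j) :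
    ∃! i : Fin (k + 1), StrictMono (Fin.insertNth i b a) := by
  classical
  have hbmem : b ∉ Finset.image a Finset.univ := by
    simp only [Finset.mem_image, Finset.mem_univ, true_and, not_exists]
    intro j hj; exact hb j hj.symm
  set s : Finset α := insert b (Finset.image a Finset.univ) with hs
  have hcard : s.card = k + 1 := by
    rw [hs, Finset.card_insert_of_notMem hbmem,
      Finset.card_image_of_injective _ ha.injective, Finset.card_univ, Fintype.card_fin]
  set e : Fin (k + 1) → α := ⇑(s.orderEmbOfFin hcard) with he
  have hesm : StrictMono e := (s.orderEmbOfFin hcard).strictMono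
  have hrange : ∀ y ∈ s, ∃ m, e m = y := by
    intro y hy
    have : y ∈ Set.range (s.orderEmbOfFin hcard) := by
      rw [Finset.range_orderEmbOfFin]; exact hy
    exact this
  obtain ⟨i, hi⟩ := hrange b (Finset.mem_insert_self _ _)
  have hkey : Fin.insertNth i b a = e := by
    have himg : Finset.image (e ∘ i.succAbove) Finset.univ = Finset.image a Finset.univ := by
      have h1 : Finset.image (e ∘ i.succAbove) Finset.univ = s.erase b := by
        ext y
        simp only [Finset.mem_image, Finset.mem_univ, true_and, Function.comp_apply,
          Finset.mem_erase]
        constructor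
        · rintro ⟨j, rfl⟩
          refine ⟨?_, Finset.orderEmbOfFin_mem s hcard _⟩
          rw [← hi]
          exact fun hc => Fin.succAbove_ne i j (hesm.injective hc)
        · rintro ⟨hy, hy2⟩
          obtain ⟨m, rfl⟩ := hrange y hy2
          have : m ≠ i := fun hc => hy (by rw [hc, hi])
          obtain ⟨j, rfl⟩ := Fin.exists_succAbove_eq this
          exact ⟨j, rfl⟩
      rw [h1, hs, Finset.erase_insert hbmem]
    have hsub : e ∘ i.succAbove = a :=
      sm_eq_of_image_eq (hesm.comp (Fin.strictMono_succAbove i)) ha himg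
    funext m
    rcases eq_or_ne m i with rfl | hm
    · rw [Fin.insertNth_apply_same, hi]
    · obtain ⟨j, rfl⟩ := Fin.exists_succAbove_eq hm
      simp only [Fin.insertNth_apply_succAbove, ← hsub]; rfl
  have hsm : StrictMono (Fin.insertNth (α := fun _ => α) i b a) := by rw [hkey]; exact hesm
  refine ⟨i, hsm, ?_⟩
  intro i' hi'
  have hcc : Fin.insertNth (α := fun _ => α) i' b a = Fin.insertNth (α := fun _ => α) i b a := by
    apply sm_eq_of_image_eq hi' hsm
    rw [image_insertNth, image_insertNth]
  have h1 : Fin.insertNth (α := fun _ => α) i b a i' = b := by rw [← hcc]; simp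
  have h2 : Fin.insertNth (α := fun _ => α) i b a i = b := by simp
  exact hsm.injective (h1.trans h2.symm)


lemma card_strictMono_in {n : ℕ} (A : Finset (Fin n)) (r : ℕ) :
    ((Finset.univ : Finset (Fin r → Fin n)).filter
      (fun f => StrictMono f ∧ ∀ j, f j ∈ A)).card = A.card.choose r := by
  classical
  rw [← Finset.card_powersetCard r A]
  apply Finset.card_bij (fun f _ => Finset.image f Finset.univ)
  · intro f hf
    simp only [Finset.mem_filter] at hf
    rw [Finset.mem_powersetCard]
    refine ⟨fun y hy => ?_, ?_⟩
    · obtain ⟨j, _, rfl⟩ := Finset.mem_image.mp hy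
      exact hf.2.2 j
    · rw [Finset.card_image_of_injective _ hf.2.1.injective, Finset.card_univ, Fintype.card_fin]
  · intro f hf g hg hfg
    simp only [Finset.mem_filter] at hf hg
    apply sm_eq_of_image_eq hf.2.1 hg.2.1
    convert hfg using 2 <;> exact Subsingleton.elim _ _
  · intro s hs
    rw [Finset.mem_powersetCard] at hs
    refine ⟨s.orderEmbOfFin hs.2, ?_, ?_⟩
    · simp only [Finset.mem_filter]
      exact ⟨Finset.mem_univ _, (s.orderEmbOfFin hs.2).strictMono,
        fun j => hs.1 (Finset.orderEmbOfFin_mem s hs.2 j)⟩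
    · apply Finset.coe_injective
      rw [Finset.coe_image, Finset.coe_univ, Set.image_univ]
      exact Finset.range_orderEmbOfFin s hs.2

lemma card_inj_avoid (n r : ℕ) (w : Fin n) :
    ((Finset.univ : Finset (Fin r → Fin n)).filter
      (fun f => Function.Injective f ∧ ∀ j, f j ≠ w)).card = (n - 1).descFactorial r := by
  classical
  rw [← Fintype.card_subtype]
  have e : {f : Fin r → Fin n // Function.Injective f ∧ ∀ j, f j ≠ w} ≃
      (Fin r ↪ {y : Fin n // y ≠ w}) :=
    { toFun := fun f => ⟨fun j => ⟨f.1 j, f.2.2 j⟩,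
        fun a b h => f.2.1 (congrArg Subtype.val h)⟩
      invFun := fun e => ⟨fun j => (e j).1,
        ⟨fun a b h => e.injective (Subtype.ext h), fun j => (e j).2⟩⟩
      left_inv := fun f => rfl
      right_inv := fun e => by ext j; rfl }
  rw [Fintype.card_congr e, Fintype.card_embedding_eq, Fintype.card_fin]
  congr 1
  rw [Fintype.card_subtype_compl, Fintype.card_fin, Fintype.card_subtype_eq]

lemma sum_countP {α β : Type*} (U : Finset α) (X : Multiset β) (P : α → β → Prop) :
    (∑ u ∈ U, X.countP (fun b => P u b)) =
      (X.map (fun b => (U.filter (fun u => P u b)).card)).sum := by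
  classical
  induction X using Multiset.induction with
  | empty => simp
  | cons b X ih =>
    simp only [Multiset.countP_cons, Multiset.map_cons, Multiset.sum_cons,
      Finset.sum_add_distrib, ih, Finset.card_filter]
    rw [add_comm]

lemma sum_map_ite {β : Type*} (X : Multiset β) (p : β → Prop) (c : ℕ) :
    (X.map (fun b => if p b then c else 0)).sum = c * X.countP p := by
  classical
  induction X using Multiset.induction with
  | empty => simp
  | cons b X ih =>
    simp only [Multiset.map_cons, Multiset.sum_cons, Multiset.countP_cons, ih, Nat.mul_add]
    by_cases h : p b <;> simp [h] <;> ring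

lemma map_sum_comm {β ι : Type*} (X : Multiset β) (F : Finset ι) (g : ι → β → ℚ) :
    (X.map (fun b => ∑ r ∈ F, g r b)).sum = ∑ r ∈ F, (X.map (g r)).sum := by
  induction X using Multiset.induction with
  | empty => simp
  | cons b X ih => simp [Multiset.sum_cons, ih, Finset.sum_add_distrib]

lemma map_cast_sum {β : Type*} (X : Multiset β) (f : β → ℕ) :
    (((X.map f).sum : ℕ) : ℚ) = (X.map (fun b => (f b : ℚ))).sum := by
  induction X using Multiset.induction with
  | empty => simp
  | cons b X ih => simp [Multiset.sum_cons, ih]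


lemma strictMono_snoc_iff {r : ℕ} {α : Type*} [Preorder α] (d : Fin r → α) (z : α) :
    StrictMono (Fin.snoc d z : Fin (r + 1) → α) ↔ StrictMono d ∧ ∀ j, d j < z := by
  constructor
  · intro h
    constructor
    · intro j₁ j₂ hj
      have := h (show (j₁.castSucc : Fin (r + 1)) < j₂.castSucc by
        rwa [Fin.castSucc_lt_castSucc_iff])
      simpa using this
    · intro j
      have := h (Fin.castSucc_lt_last j)
      simpa using this
  · rintro ⟨hd, hz⟩
    rw [Fin.strictMono_iff_lt_succ]
    intro j
    rcases eq_or_ne j.succ (Fin.last r) with hl | hl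
    · rw [hl, Fin.snoc_last, Fin.snoc_castSucc]
      exact hz j
    · have hjr : (j : ℕ) + 1 < r := by
        have h1 : ((j.succ : Fin (r + 1)) : ℕ) ≠ r := fun hc => hl (Fin.ext (by simpa using hc))
        have h2 := j.succ.isLt
        simp only [Fin.val_succ] at h1 h2
        omega
      have hcast : j.succ = Fin.castSucc ⟨(j : ℕ) + 1, hjr⟩ := by
        apply Fin.ext; simp
      rw [hcast, Fin.snoc_castSucc, Fin.snoc_castSucc]
      exact hd (show j < ⟨(j : ℕ) + 1, hjr⟩ by rw [Fin.lt_def]; simp)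


lemma count_cov (v t l : ℕ) (htv : t ≤ v) (X : Multiset (Equiv.Perm (Fin v)))
    (hX : IsPSCA v t l X) :
    ∀ d k : ℕ, k + d = t → ∀ u : Fin k → Fin v, Function.Injective u →
      k.factorial * X.countP (fun π => Covers π u) = t.factorial * l := by
  intro d
  induction d with
  | zero =>
    intro k hk u hu
    obtain rfl : k = t := by omega
    rw [hX u hu]
  | succ d ih =>
    intro k hk u hu
    have hkt : k < t := by omega
    have hkv : k < v := lt_of_lt_of_le hkt htv
    classical
    set B : Finset (Fin v) := Finset.univ \ Finset.image u Finset.univ with hB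
    have hmemB : ∀ x, x ∈ B ↔ ∀ j, x ≠ u j := by
      intro x
      simp [hB, Finset.mem_sdiff, Finset.mem_image, eq_comm]
    have hcardB : B.card = v - k := by
      rw [hB, Finset.card_sdiff_of_subset (Finset.subset_univ _), Finset.card_univ, Fintype.card_fin,
        Finset.card_image_of_injective _ hu, Finset.card_univ, Fintype.card_fin]
    set U : Finset (Fin (k + 1) × Fin v) := Finset.univ ×ˢ B with hU
    have hcardU : U.card = (k + 1) * (v - k) := by
      rw [hU, Finset.card_product, Finset.card_univ, Fintype.card_fin, hcardB]
    have hmemU : ∀ p : Fin (k + 1) × Fin v, p ∈ U ↔ ∀ j, p.2 ≠ u j := by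
      intro p
      rw [hU, Finset.mem_product]
      simp only [Finset.mem_univ, true_and]
      exact hmemB p.2
    have h1 : ∀ p ∈ U,
        (k + 1).factorial * X.countP (fun π => Covers π (Fin.insertNth p.1 p.2 u))
          = t.factorial * l := by
      intro p hp
      exact ih (k + 1) (by omega) _ (insertNth_injective hu ((hmemU p).mp hp))
    have hconv : ∀ (π : Equiv.Perm (Fin v)) (i : Fin (k + 1)) (x : Fin v),
        Covers π (Fin.insertNth i x u) ↔
          StrictMono (Fin.insertNth (α := fun _ => Fin v) i (π.symm x)
            (fun j => π.symm (u j))) := by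
      intro π i x
      have hcomp : (fun m => π.symm (Fin.insertNth (α := fun _ => Fin v) i x u m)) =
          Fin.insertNth (α := fun _ => Fin v) i (π.symm x) (fun j => π.symm (u j)) := by
        funext m
        exact congrFun (comp_insertNth (⇑π.symm) i x u) m
      unfold Covers
      rw [hcomp]
    have h2 : ∀ π : Equiv.Perm (Fin v),
        (U.filter (fun p => Covers π (Fin.insertNth p.1 p.2 u))).card
          = if Covers π u then v - k else 0 := by
      intro π
      by_cases hc : Covers π u
      · rw [if_pos hc, ← hcardB]
        have hsm : StrictMono (fun j => π.symm (u j)) := hc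
        have hb : ∀ x : Fin v, (∀ j, x ≠ u j) → ∀ j, π.symm x ≠ π.symm (u j) := by
          intro x hx j hcon
          exact hx j (π.symm.injective hcon)
        apply Finset.card_bij (fun p _ => p.2)
        · intro p hp
          rw [Finset.mem_filter] at hp
          rw [hB, Finset.mem_sdiff]
          refine ⟨Finset.mem_univ _, ?_⟩
          rw [Finset.mem_image]
          rintro ⟨j, _, hcon⟩
          exact ((hmemU p).mp hp.1 j) hcon.symm
        · intro p hp q hq hpq
          rw [Finset.mem_filter] at hp hq
          have hup := (hconv π p.1 p.2).mp hp.2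
          have huq := (hconv π q.1 q.2).mp hq.2
          have hx := (hmemU p).mp hp.1
          obtain ⟨i₀, _, huniq⟩ := existsUnique_insertNth_strictMono hsm (hb p.2 hx)
          have e1 := huniq p.1 hup
          have e2 := huniq q.1 (by rw [← hpq] at huq; exact huq)
          ext
          · rw [e1, e2]
          · rw [hpq]
        · intro x hx
          rw [hB, Finset.mem_sdiff, Finset.mem_image] at hx
          have hx' : ∀ j, x ≠ u j := by
            intro j hcon
            exact hx.2 ⟨j, Finset.mem_univ _, hcon.symm⟩
          obtain ⟨i₀, hi₀, _⟩ := existsUnique_insertNth_strictMono hsm (hb x hx')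
          refine ⟨(i₀, x), ?_, rfl⟩
          rw [Finset.mem_filter]
          exact ⟨(hmemU (i₀, x)).mpr hx', (hconv π i₀ x).mpr hi₀⟩
      · rw [if_neg hc, Finset.card_eq_zero, Finset.filter_eq_empty_iff]
        intro p hp hcov
        apply hc
        have := (hconv π p.1 p.2).mp hcov
        exact strictMono_of_insertNth this
    set c : ℕ := X.countP (fun π => Covers π u) with hc
    have chain : (k + 1).factorial * ((v - k) * c) = ((k + 1) * (v - k)) * (t.factorial * l) := by
      have e1 : (v - k) * c = (X.map (fun π => if Covers π u then v - k else 0)).sum :=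
        (sum_map_ite X _ _).symm
      have e2 : (X.map (fun π => if Covers π u then v - k else 0)).sum
          = (X.map (fun π =>
              (U.filter (fun p => Covers π (Fin.insertNth p.1 p.2 u))).card)).sum := by
        congr 1
        apply Multiset.map_congr rfl
        intro π _
        rw [h2 π]
      have e3 := (sum_countP U X (fun p π => Covers π (Fin.insertNth p.1 p.2 u))).symm
      have e4 : (k + 1).factorial * ∑ p ∈ U,
          X.countP (fun π => Covers π (Fin.insertNth p.1 p.2 u)) = U.card * (t.factorial * l) := by
        rw [Finset.mul_sum]
        rw [Finset.sum_congr rfl h1]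
        rw [Finset.sum_const, smul_eq_mul]
      rw [e1, e2, e3, e4, hcardU]
    have hgoal : ((k + 1) * (v - k)) * (k.factorial * c) = ((k + 1) * (v - k)) * (t.factorial * l) := by
      rw [← chain, Nat.factorial_succ]
      ring
    have hpos : 0 < (k + 1) * (v - k) := by
      apply Nat.mul_pos (Nat.succ_pos k)
      omega
    exact Nat.eq_of_mul_eq_mul_left hpos hgoal

lemma count_cov' (v t l : ℕ) (htv : t ≤ v) (X : Multiset (Equiv.Perm (Fin v)))
    (hX : IsPSCA v t l X) {k : ℕ} (hk : k ≤ t) (u : Fin k → Fin v)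
    (hu : Function.Injective u) :
    k.factorial * X.countP (fun π => Covers π u) = t.factorial * l :=
  count_cov v t l htv X hX (t - k) k (by omega) u hu


lemma key_binom (v t l : ℕ) (htv : t ≤ v) (X : Multiset (Equiv.Perm (Fin v)))
    (hX : IsPSCA v t l X) (w : Fin v) (r : ℕ) (hr : r < t) :
    (r + 1).factorial * (X.map (fun π => ((π.symm w : Fin v) : ℕ).choose r)).sum
      = t.factorial * l * (v - 1).descFactorial r := by
  classical
  set U : Finset (Fin r → Fin v) :=
    Finset.univ.filter (fun f => Function.Injective f ∧ ∀ j, f j ≠ w) with hU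
  have hcardU : U.card = (v - 1).descFactorial r := card_inj_avoid v r w
  have h1 : ∀ u ∈ U,
      (r + 1).factorial * X.countP (fun π => Covers π (Fin.snoc u w)) = t.factorial * l := by
    intro u hu
    rw [hU, Finset.mem_filter] at hu
    apply count_cov' v t l htv X hX (Nat.succ_le_of_lt hr)
    rw [← Fin.insertNth_last']
    exact insertNth_injective hu.2.1 (fun j => (hu.2.2 j).symm)
  have hconv : ∀ (π : Equiv.Perm (Fin v)) (u : Fin r → Fin v),
      Covers π (Fin.snoc u w) ↔
        (StrictMono (fun j => π.symm (u j)) ∧ ∀ j, π.symm (u j) < π.symm w) := by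
    intro π u
    have hcomp : (fun m => π.symm (Fin.snoc (α := fun _ => Fin v) u w m)) =
        Fin.snoc (fun j => π.symm (u j)) (π.symm w) := by
      funext m
      exact congrFun (Fin.comp_snoc (⇑π.symm) u w) m
    unfold Covers
    rw [hcomp, strictMono_snoc_iff]
  have h2 : ∀ π : Equiv.Perm (Fin v),
      (U.filter (fun u => Covers π (Fin.snoc u w))).card
        = ((π.symm w : Fin v) : ℕ).choose r := by
    intro π
    set z : Fin v := π.symm w with hz
    have hcsm := card_strictMono_in (Finset.Iio z) r
    rw [Fin.card_Iio] at hcsm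
    rw [← hcsm]
    apply Finset.card_bij (fun u _ => fun j => π.symm (u j))
    · intro u hu
      rw [Finset.mem_filter] at hu
      obtain ⟨hsm, hlt⟩ := (hconv π u).mp hu.2
      rw [Finset.mem_filter]
      exact ⟨Finset.mem_univ _, hsm, fun j => Finset.mem_Iio.mpr (hlt j)⟩
    · intro u hu u' hu' huu
      funext j
      exact π.symm.injective (congrFun huu j)
    · intro d hd
      rw [Finset.mem_filter] at hd
      obtain ⟨_, hdsm, hdlt⟩ := hd
      refine ⟨fun j => π (d j), ?_, ?_⟩
      · rw [Finset.mem_filter]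
        constructor
        · rw [hU, Finset.mem_filter]
          refine ⟨Finset.mem_univ _, fun a b hab => hdsm.injective (π.injective hab), ?_⟩
          intro j hcon
          have hdz : d j = z := by rw [hz, ← hcon, Equiv.symm_apply_apply]
          have hlt := Finset.mem_Iio.mp (hdlt j)
          rw [hdz] at hlt
          exact lt_irrefl _ hlt
        · rw [hconv]
          constructor
          · simpa using hdsm
          · intro j
            simpa using Finset.mem_Iio.mp (hdlt j)
      · funext j
        simp
  have hS : (X.map (fun π => ((π.symm w : Fin v) : ℕ).choose r)).sum
      = ∑ u ∈ U, X.countP (fun π => Covers π (Fin.snoc u w)) := by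
    rw [sum_countP U X (fun u π => Covers π (Fin.snoc u w))]
    congr 1
    apply Multiset.map_congr rfl
    intro π _
    exact (h2 π).symm
  rw [hS, Finset.mul_sum, Finset.sum_congr rfl h1, Finset.sum_const, smul_eq_mul, hcardU]
  ring


lemma sum_range_choose_eq (n rr : ℕ) :
    ∑ i ∈ Finset.range n, i.choose rr = n.choose (rr + 1) := by
  induction n with
  | zero => simp
  | succ n ih =>
    rw [Finset.sum_range_succ, ih, Nat.choose_succ_succ']
    omega

lemma dcount_eq (v : ℕ) (X : Multiset (Equiv.Perm (Fin v))) (w : Fin v) (j : ℕ) :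
    dcount v X w j = X.countP (fun π => ((π.symm w : Fin v) : ℕ) = j) := by
  unfold dcount
  apply Multiset.countP_congr rfl
  intro π _
  refine propext ?_
  constructor
  · rintro ⟨p, hp, hw⟩
    rw [← hp]
    congr 1
    rw [← hw, Equiv.symm_apply_apply]
  · intro h
    exact ⟨π.symm w, h, by simp⟩

lemma sum_dcount (v : ℕ) (X : Multiset (Equiv.Perm (Fin v))) (w : Fin v) (f : ℕ → ℚ) :
    ∑ j ∈ Finset.range v, f j * (dcount v X w j : ℚ)
      = (X.map (fun π => f ((π.symm w : Fin v) : ℕ))).sum := by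
  classical
  simp only [dcount_eq]
  induction X using Multiset.induction with
  | empty => simp
  | cons b X ih =>
    simp only [Multiset.countP_cons, Multiset.map_cons, Multiset.sum_cons, Nat.cast_add, mul_add,
      Finset.sum_add_distrib, ih]
    rw [add_comm]
    congr 1
    rw [Finset.sum_eq_single (((b.symm w : Fin v)) : ℕ)]
    · simp
    · intro j _ hj
      simp [Ne.symm hj]
    · intro hmem
      exact absurd (Finset.mem_range.mpr (b.symm w).isLt) hmem

lemma choose_id (j rr : ℕ) :
    (rr : ℚ) * (j.choose rr : ℚ) + ((rr : ℚ) + 1) * (j.choose (rr + 1) : ℚ)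
      = (j : ℚ) * (j.choose rr : ℚ) := by
  rcases le_or_gt rr j with h | h
  · have h0 := Nat.choose_succ_right_eq j rr
    have hcast : (j.choose (rr + 1) : ℚ) * ((rr : ℚ) + 1) = (j.choose rr : ℚ) * ((j : ℚ) - rr) := by
      have := congrArg (fun x : ℕ => (x : ℚ)) h0
      push_cast [h] at this
      exact this
    linear_combination hcast
  · have h1 : j.choose rr = 0 := Nat.choose_eq_zero_of_lt h
    have h2 : j.choose (rr + 1) = 0 := Nat.choose_eq_zero_of_lt (h.trans (Nat.lt_succ_self rr))
    simp [h1, h2]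

lemma pow_eq_sum_choose (s : ℕ) :
    ∃ c : ℕ → ℚ, ∀ j : ℕ, (j : ℚ) ^ s = ∑ r ∈ Finset.range (s + 1), c r * (j.choose r : ℚ) := by
  induction s with
  | zero => exact ⟨fun _ => 1, fun j => by simp⟩
  | succ s ih =>
    obtain ⟨c, hc⟩ := ih
    set c' : ℕ → ℚ :=
      fun r => (if r ≤ s then c r * r else 0) + (if 1 ≤ r then c (r - 1) * r else 0) with hc'
    refine ⟨c', fun j => ?_⟩
    have key : ∀ r : ℕ, (j : ℚ) * (c r * (j.choose r : ℚ))
        = c r * r * (j.choose r : ℚ) + c r * ((r : ℚ) + 1) * (j.choose (r + 1) : ℚ) := by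
      intro r
      linear_combination (-(c r)) * choose_id j r
    have e1 : (j : ℚ) ^ (s + 1) = ∑ r ∈ Finset.range (s + 1),
        (c r * r * (j.choose r : ℚ) + c r * ((r : ℚ) + 1) * (j.choose (r + 1) : ℚ)) := by
      have hp : (j : ℚ) ^ (s + 1) = (j : ℚ) * (j : ℚ) ^ s := by ring
      rw [hp, hc, Finset.mul_sum]
      exact Finset.sum_congr rfl fun r _ => key r
    have e2 : ∑ r ∈ Finset.range (s + 1 + 1), c' r * (j.choose r : ℚ)
        = (∑ r ∈ Finset.range (s + 1 + 1), (if r ≤ s then c r * r else 0) * (j.choose r : ℚ))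
          + ∑ r ∈ Finset.range (s + 1 + 1), (if 1 ≤ r then c (r - 1) * r else 0) * (j.choose r : ℚ) := by
      rw [← Finset.sum_add_distrib]
      exact Finset.sum_congr rfl fun r _ => by rw [hc']; ring
    rw [e1, Finset.sum_add_distrib, e2]
    congr 1
    · have hcong : ∀ r ∈ Finset.range (s + 1),
          c r * r * (j.choose r : ℚ) = (if r ≤ s then c r * r else 0) * (j.choose r : ℚ) := by
        intro r hr
        have hrs : r ≤ s := by
          have := Finset.mem_range.mp hr
          omega
        rw [if_pos hrs]
      rw [Finset.sum_congr rfl hcong]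
      apply Finset.sum_subset (Finset.range_subset_range.mpr (by omega))
      intro x hx hnx
      have hxs : ¬ x ≤ s := by
        have h2 : ¬ x < s + 1 := fun hcon => hnx (Finset.mem_range.mpr hcon)
        omega
      rw [if_neg hxs, zero_mul]
    · rw [Finset.sum_range_succ' _ (s + 1)]
      have h0 : (if (1:ℕ) ≤ 0 then c (0 - 1) * ((0:ℕ) : ℚ) else 0) * (j.choose 0 : ℚ) = 0 := by
        norm_num
      rw [h0, add_zero]
      apply Finset.sum_congr rfl
      intro r hr
      have h1r : 1 ≤ r + 1 := by omega
      rw [if_pos h1r, Nat.add_sub_cancel]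
      push_cast
      ring


lemma nat_id (v r : ℕ) (hv : 1 ≤ v) :
    v * (v - 1).descFactorial r = (r + 1).factorial * v.choose (r + 1) := by
  rw [← Nat.descFactorial_eq_factorial_mul_choose]
  obtain ⟨v', rfl⟩ : ∃ v', v = v' + 1 := ⟨v - 1, by omega⟩
  rw [Nat.succ_descFactorial_succ]
  simp

lemma key_binomQ (v t l : ℕ) (hv : 1 ≤ v) (htv : t ≤ v) (X : Multiset (Equiv.Perm (Fin v)))
    (hX : IsPSCA v t l X) (w : Fin v) (r : ℕ) (hr : r < t) :
    (X.map (fun π => (((π.symm w : Fin v) : ℕ).choose r : ℚ))).sum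
      = ((t.factorial : ℚ) * l / v) * ∑ i ∈ Finset.range v, (i.choose r : ℚ) := by
  have h := key_binom v t l htv X hX w r hr
  set S : ℚ := (X.map (fun π => (((π.symm w : Fin v) : ℕ).choose r : ℚ))).sum with hS
  have hA : (((X.map (fun π => ((π.symm w : Fin v) : ℕ).choose r)).sum : ℕ) : ℚ) = S :=
    map_cast_sum X _
  have h' : ((r + 1).factorial : ℚ) * S = (t.factorial : ℚ) * l * ((v - 1).descFactorial r : ℚ) := by
    rw [← hA]
    exact_mod_cast congrArg (fun x : ℕ => (x : ℚ)) h
  have hnid : (v : ℚ) * ((v - 1).descFactorial r : ℚ)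
      = ((r + 1).factorial : ℚ) * (v.choose (r + 1) : ℚ) := by
    exact_mod_cast congrArg (fun x : ℕ => (x : ℚ)) (nat_id v r hv)
  have hsum : ∑ i ∈ Finset.range v, (i.choose r : ℚ) = (v.choose (r + 1) : ℚ) := by
    rw [← sum_range_choose_eq v r]
    push_cast
    rfl
  rw [hsum]
  have hfne : ((r + 1).factorial : ℚ) ≠ 0 := Nat.cast_ne_zero.mpr (Nat.factorial_ne_zero _)
  have hvne : (v : ℚ) ≠ 0 := Nat.cast_ne_zero.mpr (by omega)
  rw [div_mul_eq_mul_div, eq_div_iff hvne]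
  apply mul_left_cancel₀ hfne
  linear_combination (v : ℚ) * h' + (t.factorial : ℚ) * l * hnid

end PSCAaux

/-- Theorem 2.2: for a PSCA(v, t, λ), every symbol `w` and every `1 ≤ s < t` satisfy
`(1/(t!·λ)) Σ_j j^s d_w(j) = (1/v) Σ_i i^s`. -/
theorem stmt5 (v t l : ℕ) (ht : 2 ≤ t) (htv : t ≤ v) (hl : 1 ≤ l)
    (X : Multiset (Equiv.Perm (Fin v))) (hX : IsPSCA v t l X)
    (w : Fin v) (s : ℕ) (hs1 : 1 ≤ s) (hst : s < t) :
    (1 / ((t.factorial : ℚ) * l)) * ∑ j ∈ Finset.range v, (j : ℚ) ^ s * dcount v X w j =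
      (1 / (v : ℚ)) * ∑ i ∈ Finset.range v, (i : ℚ) ^ s := by
  classical
  have hv : 1 ≤ v := le_trans (le_trans one_le_two ht) htv
  obtain ⟨c, hc⟩ := PSCAaux.pow_eq_sum_choose s
  have e1 := PSCAaux.sum_dcount v X w (fun j => (j : ℚ) ^ s)
  have e2 : (X.map (fun π => ((((π.symm w : Fin v)) : ℕ) : ℚ) ^ s)).sum
      = ∑ r ∈ Finset.range (s + 1),
          c r * (X.map (fun π => (((π.symm w : Fin v) : ℕ).choose r : ℚ))).sum := by
    have := PSCAaux.map_sum_comm X (Finset.range (s + 1))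
      (fun r π => c r * (((π.symm w : Fin v) : ℕ).choose r : ℚ))
    rw [show (X.map (fun π => ((((π.symm w : Fin v)) : ℕ) : ℚ) ^ s))
        = X.map (fun π => ∑ r ∈ Finset.range (s + 1),
            c r * (((π.symm w : Fin v) : ℕ).choose r : ℚ)) from
      Multiset.map_congr rfl (fun π _ => hc _), this]
    apply Finset.sum_congr rfl
    intro r _
    exact Multiset.sum_map_mul_left
  have e3 : ∀ r ∈ Finset.range (s + 1),
      c r * (X.map (fun π => (((π.symm w : Fin v) : ℕ).choose r : ℚ))).sum
        = c r * (((t.factorial : ℚ) * l / v) * ∑ i ∈ Finset.range v, (i.choose r : ℚ)) := by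
    intro r hr
    congr 1
    apply PSCAaux.key_binomQ v t l hv htv X hX w r
    have := Finset.mem_range.mp hr
    omega
  have e4 : ∑ r ∈ Finset.range (s + 1),
      c r * (((t.factorial : ℚ) * l / v) * ∑ i ∈ Finset.range v, (i.choose r : ℚ))
        = ((t.factorial : ℚ) * l / v) * ∑ i ∈ Finset.range v, (i : ℚ) ^ s := by
    have step1 : ∀ r ∈ Finset.range (s + 1),
        c r * (((t.factorial : ℚ) * l / v) * ∑ i ∈ Finset.range v, (i.choose r : ℚ))
          = ((t.factorial : ℚ) * l / v) * ∑ i ∈ Finset.range v, c r * (i.choose r : ℚ) := by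
      intro r _
      simp only [Finset.mul_sum]
      apply Finset.sum_congr rfl
      intro i _
      ring
    rw [Finset.sum_congr rfl step1, ← Finset.mul_sum, Finset.sum_comm]
    congr 1
    apply Finset.sum_congr rfl
    intro i _
    exact (hc i).symm
  rw [e1, e2, Finset.sum_congr rfl e3, e4]
  have htne : (t.factorial : ℚ) ≠ 0 := Nat.cast_ne_zero.mpr (Nat.factorial_ne_zero _)
  have hlne : (l : ℚ) ≠ 0 := Nat.cast_ne_zero.mpr (by omega)
  have hvne : (v : ℚ) ≠ 0 := Nat.cast_ne_zero.mpr (by omega)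
  field_simp
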